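/- Let l < u be real numbers, 0 < μ ≤ L, and let f : [l,u] → ℝ attain its minimum over [l,u] at a point x* ∈ [l,u] and satisfy (μ/2)(x − x*)² ≤ f(x) − f(x*) ≤ (L/2)(x − x*)² for all x ∈ [l,u]. Let n be a positive integer with n ≥ 2·√(L/μ), and for i = 0,…,n set x_i = l + i·(u−l)/n. If i* ∈ {0,…,n} is an index minimizing f(x_i) over i ∈ {0,…,n}, then |x_{i*} − x*| ≤ (u−l)/4. -/

import Mathlib

set_option maxHeartbeats 1000000 in
/-- one iteration of the one-dimensional BBS algorithm:
if `n ≥ 2√(L/μ)`, the grid point with smallest `f`-value is within `(u-l)/4`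
of the true minimizer `x*`. -/
theorem bbs_one_dim (l u μ L : ℝ) (hlu : l < u) (hμ : 0 < μ) (hμL : μ ≤ L)
    (f : ℝ → ℝ) (xstar : ℝ) (hxstar : xstar ∈ Set.Icc l u)
    (hmin : ∀ x ∈ Set.Icc l u, f xstar ≤ f x)
    (hlow : ∀ x ∈ Set.Icc l u, μ / 2 * (x - xstar) ^ 2 ≤ f x - f xstar)
    (hupp : ∀ x ∈ Set.Icc l u, f x - f xstar ≤ L / 2 * (x - xstar) ^ 2)
    (n : ℕ) (hn0 : 0 < n) (hn : 2 * Real.sqrt (L / μ) ≤ n)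
    (x : ℕ → ℝ) (hx : ∀ i, x i = l + i * (u - l) / n)
    (istar : ℕ) (histar : istar ≤ n)
    (hbest : ∀ i ≤ n, f (x istar) ≤ f (x i)) :
    |x istar - xstar| ≤ (u - l) / 4 := by
  have hn0' : (0:ℝ) < n := by exact_mod_cast hn0
  set h : ℝ := (u - l) / n with hh
  have hhpos : 0 < h := div_pos (by linarith) hn0'
  clear_value h
  have hnh : (n:ℝ) * h = u - l := by
    rw [hh]; field_simp
  have hmem : ∀ i ≤ n, x i ∈ Set.Icc l u := by
    intro i hi
    rw [hx]
    constructor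
    · have : 0 ≤ (i:ℝ) * (u - l) / n :=
        div_nonneg (mul_nonneg (Nat.cast_nonneg _) (by linarith)) hn0'.le
      linarith
    · have hi' : (i:ℝ) ≤ n := by exact_mod_cast hi
      have : (i:ℝ) * (u - l) / n ≤ u - l := by
        rw [div_le_iff₀ hn0']
        nlinarith
      linarith
  set t : ℝ := (xstar - l) * n / (u - l) with ht
  have ht0 : 0 ≤ t := by
    apply div_nonneg
    · nlinarith [hxstar.1]
    · linarith
  have htn : t ≤ n := by
    rw [ht, div_le_iff₀ (by linarith : (0:ℝ) < u - l)]
    nlinarith [hxstar.2]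
  have hul : u - l ≠ 0 := by linarith
  have hnne : (n:ℝ) ≠ 0 := ne_of_gt hn0'
  have hth : l + t * h = xstar := by
    rw [ht, hh]
    field_simp
    ring
  set j : ℕ := ⌊t + 1/2⌋₊ with hj
  have hjn : j ≤ n := by
    have h1 : t + 1/2 < (n:ℝ) + 1 := by linarith
    have := (Nat.floor_lt (by linarith : (0:ℝ) ≤ t + 1/2)).mpr
      (by push_cast; linarith : t + 1/2 < ((n+1 : ℕ) : ℝ))
    omega
  have hjle : (j:ℝ) ≤ t + 1/2 := Nat.floor_le (by linarith)
  have hjgt : t + 1/2 < (j:ℝ) + 1 := Nat.lt_floor_add_one _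
  clear_value j
  clear_value t
  have hdist : |x j - xstar| ≤ h / 2 := by
    rw [hx]
    have hxj : (j:ℝ) * (u - l) / n = (j:ℝ) * h := by
      rw [hh]; ring
    rw [hxj, ← hth]
    have heq : l + (j:ℝ) * h - (l + t * h) = ((j:ℝ) - t) * h := by ring
    rw [heq, abs_mul, abs_of_pos hhpos]
    have : |(j:ℝ) - t| ≤ 1/2 := abs_le.mpr ⟨by linarith, by linarith⟩
    nlinarith
  have hd2 : (x j - xstar)^2 ≤ (h/2)^2 := by
    have h1 := abs_le.mp hdist
    nlinarith [h1.1, h1.2]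
  have hupb : f (x j) - f xstar ≤ L / 2 * (h/2)^2 := by
    refine le_trans (hupp _ (hmem j hjn)) ?_
    have : 0 ≤ L / 2 := by linarith
    nlinarith
  have hkey : μ / 2 * (x istar - xstar)^2 ≤ L / 2 * (h/2)^2 := by
    refine le_trans (hlow _ (hmem istar histar)) ?_
    have := hbest j hjn
    linarith
  -- from hn: L/μ ≤ (n/2)^2
  have hsq : L / μ ≤ ((n:ℝ)/2)^2 := by
    have h1 : Real.sqrt (L / μ) ≤ (n:ℝ)/2 := by linarith
    have h2 : 0 ≤ L / μ := div_nonneg (by linarith) hμ.le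
    have h3 := pow_le_pow_left₀ (Real.sqrt_nonneg (L/μ)) h1 2
    rwa [Real.sq_sqrt h2] at h3
  have hLμ : 4 * L ≤ μ * (n:ℝ)^2 := by
    rw [div_le_iff₀ hμ] at hsq
    have he : ((n:ℝ)/2)^2 * μ = μ * (n:ℝ)^2/4 := by ring
    linarith
  have hfinal : (x istar - xstar)^2 ≤ ((u-l)/4)^2 := by
    have he1 : μ/2 * (x istar - xstar)^2 = μ * (x istar - xstar)^2 / 2 := by ring
    have he2 : L/2 * (h/2)^2 = L * h^2 / 8 := by ring
    have h1 : μ * (x istar - xstar)^2 ≤ L * h^2 / 4 := by linarith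
    have hm := mul_nonneg (sub_nonneg.mpr hLμ) (sq_nonneg h)
    have he3 : (μ * (n:ℝ)^2 - 4*L) * h^2 = μ*((n:ℝ)*h)^2 - 4*(L*h^2) := by ring
    have h2 : L * h^2 / 4 ≤ μ * ((n:ℝ)*h)^2 / 16 := by linarith
    have h3 : μ * ((n:ℝ)*h)^2 / 16 = μ * ((u-l)/4)^2 := by rw [hnh]; ring
    have h4 : μ * (x istar - xstar)^2 ≤ μ * ((u-l)/4)^2 := by linarith
    exact le_of_mul_le_mul_left h4 hμ
  have habs : 0 ≤ (u - l)/4 := by linarith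
  exact abs_le.mpr (abs_le_of_sq_le_sq' hfinal habs)
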